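/- Let A be a vertex shared by two triangles ABС and ABD in ℝ² forming a non-degenerate Delaunay pair across edge AB (C and D on opposite sides of line AB, each strictly outside the other triangle's circumcircle). Let m be the midpoint of AB, and let c₁, c₂ be the circumcenters of ABC and ABD. Define the signed area contribution of this pair to the dual of vertex A as s₁·area(A, m, c₁) + s₂·area(A, m, c₂), where areas are unsigned and sᵢ is the DEC sign (+1 if cᵢ is on the same side of line AB as the apex of its triangle, −1 otherwise). Then this sum is strictly positive. -/

import Mathlib

open scoped RealInnerProductSpace

/-- The planar determinant `det(v, w)` of two vectors of `ℝ²`. -/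
noncomputable def det2 (v w : EuclideanSpace ℝ (Fin 2)) : ℝ := v 0 * w 1 - v 1 * w 0

/-- Unsigned area of the triangle with vertices `p`, `q`, `r` in `ℝ²`. -/
noncomputable def triArea (p q r : EuclideanSpace ℝ (Fin 2)) : ℝ :=
  |det2 (q - p) (r - p)| / 2

set_option maxHeartbeats 1000000 in
/-- For a non-degenerate Delaunay pair of triangles `ABC`, `ABD` across edge `AB`
(apices `C`, `D` strictly on opposite sides of line `AB`, each strictly outside the other
triangle's circumcircle), the net signed area that the pair contributes to the dual of
vertex `A` — the sum of the two elementary dual triangles `(A, m, c₁)`, `(A, m, c₂)` with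
DEC signs — is strictly positive. -/
theorem vertex_dual_pair_area_pos
    (A B C D c1 c2 m u : EuclideanSpace ℝ (Fin 2))
    (hAB : A ≠ B)
    (hm : m = midpoint ℝ A B)
    (hu : ‖u‖ = 1) (huAB : ⟪u, B - A⟫ = 0)
    (hCside : 0 < ⟪C - m, u⟫) (hDside : ⟪D - m, u⟫ < 0)
    (hc1A : dist c1 A = dist c1 B) (hc1C : dist c1 A = dist c1 C)
    (hc2A : dist c2 A = dist c2 B) (hc2D : dist c2 A = dist c2 D)
    (hDel1 : dist D c1 > dist A c1) (hDel2 : dist C c2 > dist A c2) :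
    0 < (if 0 < ⟪c1 - m, u⟫ then (1 : ℝ) else -1) * triArea A m c1
        + (if ⟪c2 - m, u⟫ < 0 then (1 : ℝ) else -1) * triArea A m c2 := by
  have hinner : ∀ x y : EuclideanSpace ℝ (Fin 2), ⟪x, y⟫ = x 0 * y 0 + x 1 * y 1 := by
    intro x y; simp [PiLp.inner_apply, Fin.sum_univ_two, RCLike.inner_apply]; ring
  have hdsq : ∀ x y : EuclideanSpace ℝ (Fin 2), dist x y ^ 2 = (x 0 - y 0)^2 + (x 1 - y 1)^2 := by
    intro x y
    rw [dist_eq_norm, ← real_inner_self_eq_norm_sq]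
    rw [hinner]; simp only [PiLp.sub_apply]; ring
  have hm0 : m 0 = (A 0 + B 0)/2 := by rw [hm]; simp [midpoint_eq_smul_add]; ring
  have hm1 : m 1 = (A 1 + B 1)/2 := by rw [hm]; simp [midpoint_eq_smul_add]; ring
  have hu2 : u 0 ^ 2 + u 1 ^ 2 = 1 := by
    have h := real_inner_self_eq_norm_sq u
    rw [hinner, hu] at h
    linear_combination h
  have huAB' : u 0 * (B 0 - A 0) + u 1 * (B 1 - A 1) = 0 := by
    have h := huAB; rw [hinner] at h
    simp only [PiLp.sub_apply] at h; linarith only [h]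
  have hABpos : 0 < (B 0 - A 0)^2 + (B 1 - A 1)^2 := by
    have h : (0:ℝ) < dist A B := dist_pos.2 hAB
    have h2 : 0 < dist A B ^ 2 := by positivity
    rw [hdsq] at h2
    have e : (A 0 - B 0)^2 + (A 1 - B 1)^2 = (B 0 - A 0)^2 + (B 1 - A 1)^2 := by ring
    linarith only [h2, e]
  have sq_of_dist : ∀ x y z w : EuclideanSpace ℝ (Fin 2), dist x y = dist z w →
      (x 0 - y 0)^2 + (x 1 - y 1)^2 = (z 0 - w 0)^2 + (z 1 - w 1)^2 := by
    intro x y z w h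
    rw [← hdsq, ← hdsq, h]
  have hc1A' := sq_of_dist _ _ _ _ hc1A
  have hc2A' := sq_of_dist _ _ _ _ hc2A
  have hc2D' := sq_of_dist _ _ _ _ hc2D
  have hDel1' : (A 0 - c1 0)^2 + (A 1 - c1 1)^2 < (D 0 - c1 0)^2 + (D 1 - c1 1)^2 := by
    have h := pow_lt_pow_left₀ hDel1 dist_nonneg (n := 2) (by norm_num)
    rwa [hdsq, hdsq] at h
  set t1 : ℝ := ⟪c1 - m, u⟫ with ht1def
  set t2 : ℝ := ⟪c2 - m, u⟫ with ht2def
  have ht1 : t1 = (c1 0 - m 0) * u 0 + (c1 1 - m 1) * u 1 := by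
    rw [ht1def, hinner]; simp [PiLp.sub_apply]
  have ht2 : t2 = (c2 0 - m 0) * u 0 + (c2 1 - m 1) * u 1 := by
    rw [ht2def, hinner]; simp [PiLp.sub_apply]
  have hpar : ∀ c : EuclideanSpace ℝ (Fin 2),
      (c 0 - A 0)^2 + (c 1 - A 1)^2 = (c 0 - B 0)^2 + (c 1 - B 1)^2 →
      (c 0 - m 0) = ((c 0 - m 0)*u 0 + (c 1 - m 1)*u 1) * u 0 ∧
      (c 1 - m 1) = ((c 0 - m 0)*u 0 + (c 1 - m 1)*u 1) * u 1 := by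
    intro c hc
    have hed : (c 0 - m 0) * (B 0 - A 0) + (c 1 - m 1) * (B 1 - A 1) = 0 := by
      rw [hm0, hm1]; linear_combination hc / 2
    have h0 : (B 0 - A 0) * ((c 0 - m 0) * u 1 - (c 1 - m 1) * u 0) = 0 := by
      linear_combination u 1 * hed - (c 1 - m 1) * huAB'
    have h1 : (B 1 - A 1) * ((c 0 - m 0) * u 1 - (c 1 - m 1) * u 0) = 0 := by
      linear_combination (c 0 - m 0) * huAB' - u 0 * hed
    have hX : (c 0 - m 0) * u 1 - (c 1 - m 1) * u 0 = 0 := by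
      by_contra hne
      have hd0 : B 0 - A 0 = 0 := by
        rcases mul_eq_zero.1 h0 with h | h
        · exact h
        · exact absurd h hne
      have hd1 : B 1 - A 1 = 0 := by
        rcases mul_eq_zero.1 h1 with h | h
        · exact h
        · exact absurd h hne
      rw [hd0, hd1] at hABpos
      norm_num at hABpos
    constructor
    · linear_combination u 1 * hX - (c 0 - m 0) * hu2
    · linear_combination -u 0 * hX - (c 1 - m 1) * hu2
  obtain ⟨hp0, hp1⟩ := hpar c1 hc1A'
  obtain ⟨hq0, hq1⟩ := hpar c2 hc2A'
  rw [← ht1] at hp0 hp1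
  rw [← ht2] at hq0 hq1
  have hDside' : (D 0 - m 0) * u 0 + (D 1 - m 1) * u 1 < 0 := by
    have h := hDside; rw [hinner] at h
    simp only [PiLp.sub_apply] at h; linarith only [h]
  have hAmu : (m 0 - A 0) * u 0 + (m 1 - A 1) * u 1 = 0 := by
    rw [hm0, hm1]; linear_combination huAB' / 2
  have hkey : t2 < t1 := by
    have e0 : c1 0 = m 0 + t1 * u 0 := by linarith only [hp0]
    have e1 : c1 1 = m 1 + t1 * u 1 := by linarith only [hp1]
    have f0 : c2 0 = m 0 + t2 * u 0 := by linarith only [hq0]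
    have f1 : c2 1 = m 1 + t2 * u 1 := by linarith only [hq1]
    have hc2D'' : (m 0 + t2*u 0 - A 0)^2 + (m 1 + t2*u 1 - A 1)^2
        = (m 0 + t2*u 0 - D 0)^2 + (m 1 + t2*u 1 - D 1)^2 := by
      rw [← f0, ← f1]; exact hc2D'
    have hid : (D 0 - c1 0)^2 + (D 1 - c1 1)^2 - ((A 0 - c1 0)^2 + (A 1 - c1 1)^2)
        = 2*(t2 - t1)*((D 0 - m 0) * u 0 + (D 1 - m 1) * u 1) := by
      rw [e0, e1]
      linear_combination -hc2D'' + (2*t2 - 2*t1) * hAmu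
    by_contra hcon
    push_neg at hcon
    have hpos : 0 < 2*(t2 - t1)*((D 0 - m 0) * u 0 + (D 1 - m 1) * u 1) := by linarith only [hid, hDel1']
    have hnp : 2*(t2 - t1)*((D 0 - m 0) * u 0 + (D 1 - m 1) * u 1) ≤ 0 :=
      mul_nonpos_of_nonneg_of_nonpos (by linarith only [hcon]) (le_of_lt hDside')
    linarith only [hpos, hnp]
  have hK : det2 (m - A) u = ((m 0 - A 0) * u 1 - (m 1 - A 1) * u 0) := by
    simp [det2, PiLp.sub_apply]
  set K : ℝ := det2 (m - A) u with hKdef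
  have hLag : ((B 0 - A 0)*u 1 - (B 1 - A 1)*u 0)^2 = (B 0 - A 0)^2 + (B 1 - A 1)^2 := by
    linear_combination ((B 0 - A 0)^2 + (B 1 - A 1)^2) * hu2
      - (u 0*(B 0 - A 0) + u 1*(B 1 - A 1)) * huAB'
  have hKpos : 0 < K^2 := by
    rw [hK, hm0, hm1]
    have e : (((A 0 + B 0)/2 - A 0) * u 1 - ((A 1 + B 1)/2 - A 1) * u 0)^2
        = (((B 0 - A 0)*u 1 - (B 1 - A 1)*u 0)^2)/4 := by ring
    rw [e, hLag]
    linarith only [hABpos]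
  have hKne : K ≠ 0 := by
    intro h; rw [h] at hKpos; simp at hKpos
  have harea1 : triArea A m c1 = |t1| * |K| / 2 := by
    have h : det2 (m - A) (c1 - A) = t1 * K := by
      rw [hK]; simp only [det2, PiLp.sub_apply]
      linear_combination (m 0 - A 0) * hp1 - (m 1 - A 1) * hp0
    rw [triArea, h, abs_mul]
  have harea2 : triArea A m c2 = |t2| * |K| / 2 := by
    have h : det2 (m - A) (c2 - A) = t2 * K := by
      rw [hK]; simp only [det2, PiLp.sub_apply]
      linear_combination (m 0 - A 0) * hq1 - (m 1 - A 1) * hq0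
    rw [triArea, h, abs_mul]
  have hKabs : 0 < |K| := abs_pos.2 hKne
  rw [harea1, harea2]
  split_ifs with h1 h2 h2
  · have ht1p : 0 < |t1| := abs_pos.2 (ne_of_gt h1)
    linarith only [mul_pos ht1p hKabs, mul_nonneg (abs_nonneg t2) (le_of_lt hKabs)]
  · rw [abs_of_pos h1, abs_of_nonneg (not_lt.1 h2)]
    have h := mul_pos (sub_pos.2 hkey) hKabs
    have e : (t1 - t2) * |K| = t1 * |K| - t2 * |K| := by ring
    rw [e] at h
    linarith only [h]
  · rw [abs_of_nonpos (not_lt.1 h1), abs_of_neg h2]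
    have h := mul_pos (sub_pos.2 hkey) hKabs
    have e : (t1 - t2) * |K| = t1 * |K| - t2 * |K| := by ring
    rw [e] at h
    linarith only [h]
  · exact absurd hkey (by push_neg at h1 h2; exact not_lt.2 (by linarith only [h1, h2]))
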